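/- In the n-th Birkhoff polytope P_n (the polytope of doubly stochastic n×n matrices), the n permutation matrices corresponding to the powers of the cyclic permutation (1 2 ⋯ n) span a special (n−1)-simplex: every facet of P_n, which is of the form {X ∈ P_n : x_{ij} = 0}, contains exactly n−1 of these n matrices. -/

import Mathlib

open Set
open Fin.NatCast Fin.CommRing

/-- The Birkhoff polytope: doubly stochastic `n × n` matrices. -/
def birkhoff (n : ℕ) : Set (Matrix (Fin n) (Fin n) ℝ) :=
  {M | (∀ i j, 0 ≤ M i j) ∧ (∀ i, ∑ j, M i j = 1) ∧ (∀ j, ∑ i, M i j = 1)}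

/-- The permutation matrices of the powers of the cycle `(1 2 ⋯ n)`. -/
def cyclicPermMatrix (n : ℕ) (k : Fin (n + 1)) : Matrix (Fin (n + 1)) (Fin (n + 1)) ℝ :=
  Matrix.of fun i j => if (finRotate (n + 1) ^ (k : ℕ)) i = j then 1 else 0

lemma finRotate_pow_apply (n k : ℕ) : ∀ i : Fin (n + 1),
    (finRotate (n + 1) ^ k) i = i + (k : Fin (n + 1)) := by
  induction k with
  | zero => simp
  | succ m ih =>
    intro i
    rw [pow_succ, Equiv.Perm.mul_apply, finRotate_succ_apply, ih (i + 1)]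
    push_cast
    ring

/-- In the Birkhoff polytope `P_{n+1}`, the `n+1` permutation matrices corresponding
to the powers of the cyclic permutation are members of the polytope, and every facet
`{X ∈ P_{n+1} : X i j = 0}` contains all but exactly one of them (exactly one `k`
has `(v k) i j ≠ 0`), i.e. they span a special simplex. -/
theorem birkhoff_special_simplex (n : ℕ) :
    (∀ k : Fin (n + 1), cyclicPermMatrix n k ∈ birkhoff (n + 1)) ∧
    ∀ i j : Fin (n + 1), ∃! k : Fin (n + 1), cyclicPermMatrix n k ∉
      {X ∈ birkhoff (n + 1) | X i j = 0} := by
  have hmem : ∀ k : Fin (n + 1), cyclicPermMatrix n k ∈ birkhoff (n + 1) := by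
    intro k
    refine ⟨fun i j => ?_, fun i => ?_, fun j => ?_⟩
    · unfold cyclicPermMatrix
      dsimp
      split <;> norm_num
    · unfold cyclicPermMatrix
      simp
    · unfold cyclicPermMatrix
      simp only [Matrix.of_apply]
      simp [Equiv.apply_eq_iff_eq_symm_apply, Finset.sum_ite_eq']
  refine ⟨hmem, fun i j => ?_⟩
  have key : ∀ k : Fin (n + 1),
      (cyclicPermMatrix n k ∉ {X ∈ birkhoff (n + 1) | X i j = 0}) ↔ i + k = j := by
    intro k
    simp only [mem_setOf_eq, cyclicPermMatrix, Matrix.of_apply, not_and,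
      finRotate_pow_apply, Fin.cast_val_eq_self]
    have hm := hmem k
    simp only [cyclicPermMatrix, finRotate_pow_apply, Fin.cast_val_eq_self] at hm
    constructor
    · intro h
      by_contra hc
      simp only [if_neg hc] at h
      exact absurd (h hm) (by simp)
    · intro hc _
      simp [if_pos hc]
  refine ⟨j - i, (key _).mpr (by ring), fun k hk => ?_⟩
  have h := (key k).mp hk
  rw [← h]; ring
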